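/- arXiv:1410.2372 — 6 statements merged into one kernel-verified Lean document; each statement's English description precedes it below -/
import Mathlib

section
/- Let φ be a continuous semiflow on a compact metric space X and τ an admissible function on X. Then the τ-topological entropy of φ equals the classical topological entropy of φ: h^τ_top(φ) = h_top(φ). -/
open Set Filter Metric ENNReal

/-- A semiflow: `φ 0 = id` and `φ (t+s) = φ t ∘ φ s` for nonnegative times. -/
def IsSemiflow {X : Type*} (φ : ℝ → X → X) : Prop :=
  (∀ x, φ 0 x = x) ∧ ∀ s t : ℝ, 0 ≤ s → 0 ≤ t → ∀ x, φ (t + s) x = φ t (φ s x)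

/-- A continuous semiflow: jointly continuous on `[0,∞) × X`. -/
def IsContSemiflow {X : Type*} [MetricSpace X] (φ : ℝ → X → X) : Prop :=
  IsSemiflow φ ∧ ContinuousOn (fun p : ℝ × X => φ p.1 p.2) (Set.Ici (0:ℝ) ×ˢ Set.univ)

/-- `τ` is an admissible function for the semiflow `ψ`, with respect to `Z`, with constant `η`:
it assigns to each point a strictly increasing sequence of positive times, with `τ₁ ≥ η` on `Z`,
gaps at least `η`, and compatible with the time translation by the semiflow. -/
def IsAdmissible {X : Type*} (ψ : ℝ → X → X) (τ : X → ℕ → ℝ) (Z : Set X) (η : ℝ) : Prop :=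
  0 < η ∧ (∀ x, StrictMono (τ x)) ∧ (∀ x n, 0 < τ x n) ∧
  (∀ x ∈ Z, η ≤ τ x 0) ∧
  (∀ x n s, 0 ≤ s → s < τ x 0 → τ (ψ s x) n = τ x n - s) ∧
  (∀ x n, η ≤ τ x (n + 1) - τ x n)

/-- The set `J^τ_{T,δ}(x) = (0,T] ∖ ⋃_{j : τ_j(x) ≤ T} (τ_j(x)-δ, τ_j(x)+δ)`. -/
def Jset {X : Type*} (τ : X → ℕ → ℝ) (T δ : ℝ) (x : X) : Set ℝ :=
  Ioc 0 T \ ⋃ j ∈ {j | τ x j ≤ T}, Ioo (τ x j - δ) (τ x j + δ)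

/-- The `τ`-dynamical ball `B^τ(x, ψ, T, ε, δ)`. -/
def tBall {X : Type*} [MetricSpace X] (ψ : ℝ → X → X) (τ : X → ℕ → ℝ)
    (x : X) (T ε δ : ℝ) : Set X :=
  {y | ∀ t ∈ Jset τ T δ x, dist (ψ t x) (ψ t y) < ε}

/-- The classical dynamical ball `B(x, ψ, T, ε)`. -/
def dynBall {X : Type*} [MetricSpace X] (ψ : ℝ → X → X) (x : X) (T ε : ℝ) : Set X :=
  {y | ∀ t ∈ Icc 0 T, dist (ψ t x) (ψ t y) < ε}

/-- `E` is `(ψ, T, ε)`-separated. -/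
def IsSep {X : Type*} [MetricSpace X] (ψ : ℝ → X → X) (T ε : ℝ) (E : Set X) : Prop :=
  ∀ x ∈ E, ∀ y ∈ E, y ≠ x → y ∉ dynBall ψ x T ε

/-- `E` is `(ψ, τ, T, ε, δ)`-separated. -/
def IsTSep {X : Type*} [MetricSpace X] (ψ : ℝ → X → X) (τ : X → ℕ → ℝ)
    (T ε δ : ℝ) (E : Set X) : Prop :=
  ∀ x ∈ E, ∀ y ∈ E, y ≠ x → y ∉ tBall ψ τ x T ε δ

/-- Maximal cardinality of a `(ψ, T, ε)`-separated subset of `Y` (in `ℝ≥0∞`). -/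
noncomputable def sepNum {X : Type*} [MetricSpace X] (ψ : ℝ → X → X) (Y : Set X)
    (T ε : ℝ) : ℝ≥0∞ :=
  ⨆ (E : Finset X) (_ : ↑E ⊆ Y ∧ IsSep ψ T ε ↑E), (E.card : ℝ≥0∞)

/-- Supremum of cardinalities of finite `(ψ, τ, T, ε, δ)`-separated subsets of `Y`. -/
noncomputable def tSepNum {X : Type*} [MetricSpace X] (ψ : ℝ → X → X) (τ : X → ℕ → ℝ)
    (Y : Set X) (T ε δ : ℝ) : ℝ≥0∞ :=
  ⨆ (E : Finset X) (_ : ↑E ⊆ Y ∧ IsTSep ψ τ T ε δ ↑E), (E.card : ℝ≥0∞)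

/-- Exponential growth rate `limsup_{T→∞} (1/T) log f(T)`, with `log ∞ = ∞`. -/
noncomputable def growthRate (f : ℝ → ℝ≥0∞) : EReal :=
  limsup (fun T : ℝ => ENNReal.log (f T) / (T : EReal)) atTop

/-- The classical topological entropy of `ψ` on `Y`
(the limit as `ε → 0⁺` is a supremum over `ε > 0` by monotonicity). -/
noncomputable def htop {X : Type*} [MetricSpace X] (ψ : ℝ → X → X) (Y : Set X) : EReal :=
  ⨆ (ε : ℝ) (_ : 0 < ε), growthRate fun T => sepNum ψ Y T ε

/-- The `τ`-topological entropy of `ψ` on `Y`, for an admissible function with constant `η`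
(the limits as `δ → 0⁺` and `ε → 0⁺` are suprema by monotonicity). -/
noncomputable def tHtop {X : Type*} [MetricSpace X] (ψ : ℝ → X → X) (τ : X → ℕ → ℝ)
    (Y : Set X) (η : ℝ) : EReal :=
  ⨆ (δ : ℝ) (_ : 0 < δ) (_ : δ < η / 2) (ε : ℝ) (_ : 0 < ε),
    growthRate fun T => tSepNum ψ τ Y T ε δ

/-- Monotonicity of growth rates. -/
lemma growthRate_mono' {f g : ℝ → ℝ≥0∞} (h : ∀ T : ℝ, 0 < T → f T ≤ g T) :
    growthRate f ≤ growthRate g := by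
  refine limsup_le_limsup ?_
  filter_upwards [eventually_gt_atTop (0:ℝ)] with T hT
  exact EReal.div_le_div_right_of_nonneg (by exact_mod_cast hT.le)
    (ENNReal.log_monotone (h T hT))

/-- Multiplying by a finite constant does not increase the growth rate. -/
lemma growthRate_const_mul_le {c : ℝ≥0∞} (hc1 : 1 ≤ c) (hct : c ≠ ⊤) (g : ℝ → ℝ≥0∞) :
    growthRate (fun T => c * g T) ≤ growthRate g := by
  have hcb : ENNReal.log c ≠ ⊥ := by
    simp only [ne_eq, ENNReal.log_eq_bot_iff]
    intro h; rw [h] at hc1; simp at hc1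
  have hctop : ENNReal.log c ≠ ⊤ := by
    simp only [ne_eq, ENNReal.log_eq_top_iff]; exact hct
  set k : ℝ := (ENNReal.log c).toReal with hkdef
  have hk : (k : EReal) = ENNReal.log c := EReal.coe_toReal hctop hcb
  have hk0 : 0 ≤ k := by
    have : (0:EReal) ≤ (k:EReal) := by rw [hk]; exact ENNReal.zero_le_log_iff.mpr hc1
    exact_mod_cast this
  rw [growthRate, growthRate]
  set L := limsup (fun T : ℝ => ENNReal.log (g T) / (T : EReal)) atTop with hLdef
  refine EReal.le_of_forall_lt_iff_le.mp fun b hb => ?_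
  obtain ⟨b', hLb', hb'b⟩ := EReal.exists_between_coe_real hb
  have hb'b' : b' < b := by exact_mod_cast hb'b
  refine limsup_le_of_le (by isBoundedDefault) ?_
  filter_upwards [eventually_lt_of_limsup_lt hLb',
    eventually_ge_atTop (max 1 (k / (b - b')))] with T h1 h2
  have hT1 : (1:ℝ) ≤ T := le_trans (le_max_left _ _) h2
  have hT0 : (0:ℝ) < T := lt_of_lt_of_le one_pos hT1
  have hTpos : (0:EReal) < (T:EReal) := by exact_mod_cast hT0
  have hTne : (T:EReal) ≠ ⊤ := EReal.coe_ne_top T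
  have ha : ENNReal.log (g T) ≤ (T:EReal) * b' :=
    (EReal.div_le_iff_le_mul hTpos hTne).mp h1.le
  have hreal : k + T * b' ≤ T * b := by
    have h2' : k / (b - b') ≤ T := le_trans (le_max_right _ _) h2
    have hbb' : 0 < b - b' := by linarith
    rw [div_le_iff₀ hbb'] at h2'
    nlinarith
  rw [ENNReal.log_mul_add, ← hk, EReal.div_le_iff_le_mul hTpos hTne]
  calc (k:EReal) + ENNReal.log (g T) ≤ (k:EReal) + (T:EReal) * (b':EReal) :=
        add_le_add_right ha _
    _ = ((k + T * b' : ℝ) : EReal) := by norm_cast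
    _ ≤ ((T * b : ℝ) : EReal) := by exact_mod_cast hreal
    _ = (T:EReal) * (b:EReal) := by norm_cast

/-- Theorem A: for a continuous semiflow on a compact metric space, the `τ`-topological
entropy coincides with the classical topological entropy. -/
theorem tHtop_eq_htop {X : Type*} [MetricSpace X] [CompactSpace X]
    (φ : ℝ → X → X) (hφ : IsContSemiflow φ) (τ : X → ℕ → ℝ) (Z : Set X) (η : ℝ)
    (hτ : IsAdmissible φ τ Z η) :
    tHtop φ τ Set.univ η = htop φ Set.univ := by
  obtain ⟨⟨hid, hadd⟩, hcont⟩ := hφ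
  obtain ⟨hη, hmono, hpos, -, -, hgap⟩ := hτ
  apply le_antisymm
  · -- easy direction: tHtop ≤ htop
    refine iSup_le fun δ => iSup_le fun hδ => iSup_le fun hδη => iSup_le fun ε =>
      iSup_le fun hε => ?_
    have hnum : ∀ T : ℝ, 0 < T → tSepNum φ τ Set.univ T ε δ ≤ sepNum φ Set.univ T ε := by
      intro T _
      refine iSup_le fun E => iSup_le fun hE => le_iSup_of_le E (le_iSup_of_le ⟨hE.1, ?_⟩ le_rfl)
      intro x hx y hy hne hdyn
      refine hE.2 x hx y hy hne fun t ht => hdyn t ⟨ht.1.1.le, ht.1.2⟩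
    exact le_trans (growthRate_mono' hnum) (le_iSup_of_le ε (le_iSup_of_le hε le_rfl))
  · -- hard direction: htop ≤ tHtop
    refine iSup_le fun ε => iSup_le fun hε => ?_
    classical
    -- uniform continuity of the flow on [0, η] × X
    have hK : IsCompact ((Icc (0:ℝ) η) ×ˢ (univ : Set X)) := isCompact_Icc.prod isCompact_univ
    have hucont := hK.uniformContinuousOn_of_continuous
      (hcont.mono (prod_mono_left Icc_subset_Ici_self))
    rw [Metric.uniformContinuousOn_iff] at hucont
    obtain ⟨ε₀, hε₀, huc⟩ := hucont ε hε
    set ε' := min ε₀ ε with hε'def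
    have hε' : 0 < ε' := lt_min hε₀ hε
    have hε'ε : ε' ≤ ε := min_le_right _ _
    have key : ∀ s ∈ Icc (0:ℝ) η, ∀ a b : X, dist a b < ε' → dist (φ s a) (φ s b) < ε := by
      intro s hs a b hab
      have hd : dist ((s, a) : ℝ × X) (s, b) < ε₀ := by
        rw [Prod.dist_eq, dist_self, max_eq_right dist_nonneg]
        exact lt_of_lt_of_le hab (min_le_left _ _)
      exact huc (s, a) (mk_mem_prod hs (mem_univ _)) (s, b) (mk_mem_prod hs (mem_univ _)) hd
    -- finite cover by balls of radius ε'/2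
    obtain ⟨C, -, hCfin, hCcov⟩ := finite_cover_balls_of_compact (isCompact_univ : IsCompact (Set.univ : Set X)) (half_pos hε')
    set F := hCfin.toFinset with hFdef
    set δ := η / 4 with hδdef
    have hδpos : 0 < δ := by positivity
    have hδη : δ < η / 2 := by rw [hδdef]; linarith
    -- key claim: a separated set inside a small ball is τ-separated
    have claim : ∀ (T : ℝ) (c : X) (E : Finset X), (↑E : Set X) ⊆ ball c (ε'/2) →
        IsSep φ T ε ↑E → IsTSep φ τ T ε' δ ↑E := by
      intro T c E hEb hEs x hx y hy hne hmem
      have hnotd := hEs x hx y hy hne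
      simp only [dynBall, mem_setOf_eq, not_forall] at hnotd
      obtain ⟨t, ht, hsep⟩ := hnotd
      push_neg at hsep
      have hxy : dist x y < ε' := by
        have h1 : dist x c < ε'/2 := mem_ball.mp (hEb hx)
        have h2 : dist y c < ε'/2 := mem_ball.mp (hEb hy)
        calc dist x y ≤ dist x c + dist c y := dist_triangle _ _ _
          _ = dist x c + dist y c := by rw [dist_comm c y]
          _ < ε'/2 + ε'/2 := by linarith
          _ = ε' := by ring
      have htη : η < t := by
        by_contra hle
        push_neg at hle
        exact absurd (key t ⟨ht.1, hle⟩ x y hxy) (not_lt.mpr hsep)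
      by_cases hJ : t ∈ Jset τ T δ x
      · exact absurd (hmem t hJ) (not_lt.mpr (le_trans hε'ε hsep))
      · have htIoc : t ∈ Ioc 0 T := ⟨lt_trans hη htη, ht.2⟩
        rw [Jset, mem_diff, not_and, not_not] at hJ
        have hmem' := hJ htIoc
        simp only [mem_iUnion, mem_setOf_eq, exists_prop] at hmem'
        obtain ⟨j, hjT, hjt⟩ := hmem'
        set t' := τ x j - δ with ht'def
        have ht'pos : 0 < t' := by
          have := hjt.2
          rw [ht'def]
          linarith
        have ht'J : t' ∈ Jset τ T δ x := by
          constructor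
          · exact ⟨ht'pos, by linarith⟩
          · intro hmem''
            simp only [mem_iUnion, mem_setOf_eq, exists_prop] at hmem''
            obtain ⟨m, hmT, hm⟩ := hmem''
            rcases lt_trichotomy m j with hmj | rfl | hmj
            · have hstep : τ x m + η ≤ τ x j := by
                have h1 := hgap x m
                have h2 : τ x (m + 1) ≤ τ x j := (hmono x).monotone (Nat.succ_le_of_lt hmj)
                linarith
              have := hm.2
              rw [ht'def] at this
              linarith
            · exact absurd hm.1 (by rw [ht'def]; linarith)
            · have hstep : τ x j + η ≤ τ x m := by
                have h1 := hgap x j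
                have h2 : τ x (j + 1) ≤ τ x m := (hmono x).monotone (Nat.succ_le_of_lt hmj)
                linarith
              have := hm.1
              rw [ht'def] at this
              linarith
        have hs : t - t' ∈ Icc (0:ℝ) η := by
          constructor
          · have := hjt.1; rw [ht'def]; linarith
          · have := hjt.2; rw [ht'def]; linarith
        have hφx : φ t x = φ (t - t') (φ t' x) := by
          have h := hadd t' (t - t') ht'pos.le hs.1 x
          rwa [sub_add_cancel] at h
        have hφy : φ t y = φ (t - t') (φ t' y) := by
          have h := hadd t' (t - t') ht'pos.le hs.1 y
          rwa [sub_add_cancel] at h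
        have hd' : ¬ dist (φ t' x) (φ t' y) < ε' := by
          intro hlt
          have := key (t - t') hs _ _ hlt
          rw [← hφx, ← hφy] at this
          exact absurd this (not_lt.mpr hsep)
        exact hd' (hmem t' ht'J)
    -- counting: sepNum ≤ (card F + 1) * tSepNum
    have count : ∀ T : ℝ, sepNum φ Set.univ T ε ≤
        ((F.card : ℝ≥0∞) + 1) * tSepNum φ τ Set.univ T ε' δ := by
      intro T
      refine iSup_le fun E => iSup_le fun hE => ?_
      obtain ⟨-, hEsep⟩ := hE
      have : DecidableEq X := Classical.decEq X
      set G : X → Finset X := fun c => E.filter (fun x => x ∈ ball c (ε'/2)) with hGdef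
      have hsub : E ⊆ F.biUnion G := by
        intro x hx
        have hxcov := hCcov (mem_univ x)
        simp only [mem_iUnion, exists_prop] at hxcov
        obtain ⟨c, hcC, hxc⟩ := hxcov
        refine Finset.mem_biUnion.mpr ⟨c, hCfin.mem_toFinset.mpr hcC, ?_⟩
        exact Finset.mem_filter.mpr ⟨hx, hxc⟩
      have hGle : ∀ c ∈ F, ((G c).card : ℝ≥0∞) ≤ tSepNum φ τ Set.univ T ε' δ := by
        intro c _
        have hGsubE : (↑(G c) : Set X) ⊆ (↑E : Set X) := by
          intro z hz
          exact Finset.mem_coe.mpr (Finset.mem_of_mem_filter z (Finset.mem_coe.mp hz))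
        have hGball : (↑(G c) : Set X) ⊆ ball c (ε'/2) := by
          intro z hz
          exact (Finset.mem_filter.mp (Finset.mem_coe.mp hz)).2
        have hGsep : IsSep φ T ε ↑(G c) := fun a ha b hb hne =>
          hEsep a (hGsubE ha) b (hGsubE hb) hne
        have hGtsep : IsTSep φ τ T ε' δ ↑(G c) := claim T c (G c) hGball hGsep
        exact le_iSup_of_le (G c) (le_iSup_of_le ⟨subset_univ _, hGtsep⟩ le_rfl)
      calc (E.card : ℝ≥0∞) ≤ ((F.biUnion G).card : ℝ≥0∞) := by
            exact_mod_cast Finset.card_le_card hsub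
        _ ≤ ((∑ c ∈ F, (G c).card : ℕ) : ℝ≥0∞) := by exact_mod_cast Finset.card_biUnion_le
        _ = ∑ c ∈ F, ((G c).card : ℝ≥0∞) := by push_cast; rfl
        _ ≤ ∑ _c ∈ F, tSepNum φ τ Set.univ T ε' δ := Finset.sum_le_sum hGle
        _ = (F.card : ℝ≥0∞) * tSepNum φ τ Set.univ T ε' δ := by
            rw [Finset.sum_const, nsmul_eq_mul]
        _ ≤ ((F.card : ℝ≥0∞) + 1) * tSepNum φ τ Set.univ T ε' δ :=
            mul_le_mul_left le_self_add _
    calc growthRate (fun T => sepNum φ Set.univ T ε)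
        ≤ growthRate (fun T => ((F.card : ℝ≥0∞) + 1) * tSepNum φ τ Set.univ T ε' δ) :=
          growthRate_mono' fun T _ => count T
      _ ≤ growthRate (fun T => tSepNum φ τ Set.univ T ε' δ) :=
          growthRate_const_mul_le le_add_self (by simp) _
      _ ≤ tHtop φ τ Set.univ η := by
          exact le_iSup_of_le δ (le_iSup_of_le hδpos (le_iSup_of_le hδη
            (le_iSup_of_le ε' (le_iSup_of_le hε' le_rfl))))
end

section
/- Let ψ be a semiflow on a metric space X and let τ, τ' be admissible functions on X such that τ' refines τ (i.e., for every x ∈ X and n there is m with τ_n(x) = τ'_m(x)). Then for all T > 0, ε > 0 and 0 < δ < η/2, every finite (ψ, τ', T, ε, δ)-separated set is (ψ, τ, T, ε, δ)-separated; hence s^{τ'}(ψ, T, ε, δ) ≤ s^τ(ψ, T, ε, δ) and h^{τ'}_top(ψ) ≤ h^τ_top(ψ). -/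
open Set Filter Metric ENNReal

private lemma Jset_subset_of_refines {X : Type*} (τ τ' : X → ℕ → ℝ)
    (href : ∀ x : X, ∀ n : ℕ, ∃ m : ℕ, τ x n = τ' x m) (T δ : ℝ) (x : X) :
    Jset τ' T δ x ⊆ Jset τ T δ x := by
  intro t ht
  refine ⟨ht.1, ?_⟩
  intro hmem
  apply ht.2
  simp only [Set.mem_iUnion] at hmem ⊢
  obtain ⟨j, hj, hjt⟩ := hmem
  obtain ⟨m, hm⟩ := href x j
  refine ⟨m, ?_, ?_⟩
  · show τ' x m ≤ T
    rw [← hm]; exact hj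
  · show t ∈ Ioo (τ' x m - δ) (τ' x m + δ)
    rw [← hm]; exact hjt

private lemma tBall_subset {X : Type*} [MetricSpace X] (ψ : ℝ → X → X) (τ τ' : X → ℕ → ℝ)
    (href : ∀ x : X, ∀ n : ℕ, ∃ m : ℕ, τ x n = τ' x m) (x : X) (T ε δ : ℝ) :
    tBall ψ τ x T ε δ ⊆ tBall ψ τ' x T ε δ := by
  intro y hy t ht
  exact hy t (Jset_subset_of_refines τ τ' href T δ x ht)

private lemma isTSep_of_refines {X : Type*} [MetricSpace X] (ψ : ℝ → X → X) (τ τ' : X → ℕ → ℝ)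
    (href : ∀ x : X, ∀ n : ℕ, ∃ m : ℕ, τ x n = τ' x m) (T ε δ : ℝ) (E : Set X)
    (hE : IsTSep ψ τ' T ε δ E) : IsTSep ψ τ T ε δ E := by
  intro x hx y hy hne hmem
  exact hE x hx y hy hne (tBall_subset ψ τ τ' href x T ε δ hmem)

private lemma tSepNum_le_of_refines {X : Type*} [MetricSpace X] (ψ : ℝ → X → X)
    (τ τ' : X → ℕ → ℝ) (href : ∀ x : X, ∀ n : ℕ, ∃ m : ℕ, τ x n = τ' x m) (T ε δ : ℝ) :
    tSepNum ψ τ' Set.univ T ε δ ≤ tSepNum ψ τ Set.univ T ε δ := by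
  refine iSup₂_le fun E hE => ?_
  exact le_iSup₂ (f := fun (E : Finset X) (_ : (↑E : Set X) ⊆ Set.univ ∧ IsTSep ψ τ T ε δ (↑E : Set X)) =>
    (E.card : ℝ≥0∞)) E ⟨hE.1, isTSep_of_refines ψ τ τ' href T ε δ _ hE.2⟩

/-- Monotonicity of the `τ`-topological entropy under refinement of admissible functions. -/
theorem tHtop_antitone_of_refines {X : Type*} [MetricSpace X]
    (ψ : ℝ → X → X) (hψ : IsSemiflow ψ) (τ τ' : X → ℕ → ℝ) (Z Z' : Set X) (η : ℝ)
    (hτ : IsAdmissible ψ τ Z η) (hτ' : IsAdmissible ψ τ' Z' η)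
    (href : ∀ x : X, ∀ n : ℕ, ∃ m : ℕ, τ x n = τ' x m) :
    (∀ T ε δ : ℝ, 0 < T → 0 < ε → 0 < δ → δ < η / 2 →
      (∀ E : Finset X, IsTSep ψ τ' T ε δ ↑E → IsTSep ψ τ T ε δ (↑E : Set X)) ∧
      tSepNum ψ τ' Set.univ T ε δ ≤ tSepNum ψ τ Set.univ T ε δ) ∧
    tHtop ψ τ' Set.univ η ≤ tHtop ψ τ Set.univ η := by
  constructor
  · intro T ε δ _ _ _ _
    exact ⟨fun E hE => isTSep_of_refines ψ τ τ' href T ε δ _ hE,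
      tSepNum_le_of_refines ψ τ τ' href T ε δ⟩
  · refine iSup₂_mono fun δ hδ => ?_
    refine iSup_mono' fun hδ2 => ⟨hδ2, ?_⟩
    refine iSup₂_mono fun ε hε => ?_
    apply Filter.limsup_le_limsup ?_ isCobounded_le_of_bot isBounded_le_of_top
    filter_upwards [Filter.eventually_gt_atTop (0:ℝ)] with T hT
    have h1 : ENNReal.log (tSepNum ψ τ' Set.univ T ε δ) ≤
        ENNReal.log (tSepNum ψ τ Set.univ T ε δ) :=
      ENNReal.log_monotone (tSepNum_le_of_refines ψ τ τ' href T ε δ)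
    have h2 : (0:EReal) ≤ (T:EReal)⁻¹ := by
      apply EReal.inv_nonneg_of_nonneg
      exact_mod_cast hT.le
    calc ENNReal.log (tSepNum ψ τ' Set.univ T ε δ) / (T:EReal)
        = ENNReal.log (tSepNum ψ τ' Set.univ T ε δ) * (T:EReal)⁻¹ := rfl
      _ ≤ ENNReal.log (tSepNum ψ τ Set.univ T ε δ) * (T:EReal)⁻¹ :=
          mul_le_mul_of_nonneg_right h1 h2
      _ = _ := rfl
end

section
/- Let ψ and ψ̃ be semiflows on metric spaces (X, d) and (X̃, d̃) with admissible functions τ and τ̃ respectively, and let h: X → X̃ be a finite-to-one, uniformly continuous, surjective map such that ψ̃_t ∘ h = h ∘ ψ_t for all t ≥ 0 and τ̃(h(x)) = τ(x) for all x ∈ X. Then h^τ_top(ψ) ≥ h^{τ̃}_top(ψ̃). -/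
open Set Filter Metric ENNReal

/-- A finite-to-one `(τ, τ̃)`-semiconjugacy does not increase the `τ`-topological entropy. -/
theorem tHtop_le_of_semiconjugacy {X Y : Type*} [MetricSpace X] [MetricSpace Y]
    (ψ : ℝ → X → X) (ψt : ℝ → Y → Y) (hψ : IsSemiflow ψ) (hψt : IsSemiflow ψt)
    (τ : X → ℕ → ℝ) (τt : Y → ℕ → ℝ) (Z : Set X) (Zt : Set Y) (η : ℝ)
    (hτ : IsAdmissible ψ τ Z η) (hτt : IsAdmissible ψt τt Zt η)
    (h : X → Y) (hsurj : Function.Surjective h) (hUC : UniformContinuous h)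
    (hfin : ∀ y : Y, (h ⁻¹' {y}).Finite)
    (hconj : ∀ t : ℝ, 0 ≤ t → ∀ x : X, ψt t (h x) = h (ψ t x))
    (htau : ∀ x : X, ∀ n : ℕ, τt (h x) n = τ x n) :
    tHtop ψ τ Set.univ η ≥ tHtop ψt τt Set.univ η := by
  rw [ge_iff_le, tHtop]
  refine iSup₂_le fun δ hδ => iSup_le fun hδη => iSup₂_le fun ε hε => ?_
  obtain ⟨ε', hε', hε'imp⟩ := Metric.uniformContinuous_iff.mp hUC ε hε
  have key : ∀ T : ℝ, tSepNum ψt τt Set.univ T ε δ ≤ tSepNum ψ τ Set.univ T ε' δ := by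
    intro T
    refine iSup₂_le fun E ⟨_, hsep⟩ => ?_
    classical
    set g : Y → X := fun y => (hsurj y).choose with hg
    have hgsec : ∀ y, h (g y) = y := fun y => (hsurj y).choose_spec
    have hginj : Function.Injective g := fun a b hab => by
      rw [← hgsec a, ← hgsec b, hab]
    set F : Finset X := E.image g with hF
    have hcard : F.card = E.card := Finset.card_image_of_injective _ hginj
    have hFsep : IsTSep ψ τ T ε' δ ↑F := by
      intro x hx x' hx' hne hball
      obtain ⟨a, ha, rfl⟩ := Finset.mem_image.mp (Finset.mem_coe.mp hx)
      obtain ⟨b, hb, rfl⟩ := Finset.mem_image.mp (Finset.mem_coe.mp hx')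
      have hab : b ≠ a := fun hba => hne (by rw [hba])
      refine hsep a ha b hb hab ?_
      intro t ht
      have hJ : Jset τt T δ a = Jset τ T δ (g a) := by
        have hτeq : τt a = τ (g a) := by
          funext n
          have := htau (g a) n; rwa [hgsec a] at this
        simp [Jset, hτeq]
      rw [hJ] at ht
      have ht0 : 0 ≤ t := le_of_lt ht.1.1
      have hd := hball t ht
      have := hε'imp hd
      rwa [← hgsec a, ← hgsec b, hconj t ht0, hconj t ht0]
    calc (E.card : ℝ≥0∞) = (F.card : ℝ≥0∞) := by rw [hcard]
      _ ≤ tSepNum ψ τ Set.univ T ε' δ :=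
          le_iSup₂_of_le F ⟨Set.subset_univ _, hFsep⟩ le_rfl
  have hgrowth : growthRate (fun T => tSepNum ψt τt Set.univ T ε δ)
      ≤ growthRate (fun T => tSepNum ψ τ Set.univ T ε' δ) := by
    refine Filter.limsup_le_limsup (Filter.eventually_atTop.mpr ⟨0, fun T hT => ?_⟩)
    exact EReal.div_le_div_right_of_nonneg (by exact_mod_cast hT)
      (ENNReal.log_monotone (key T))
  refine le_trans hgrowth ?_
  rw [tHtop]
  exact le_iSup₂_of_le δ hδ (le_iSup_of_le hδη (le_iSup₂_of_le ε' hε' le_rfl))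
end

section
/- Let (X, φ, D, I) be an impulsive dynamical system with impulsive semiflow ψ, and suppose I(D) ∩ D = ∅. If μ is a Borel probability measure on X invariant under ψ (μ(ψ_t⁻¹ A) = μ(A) for all t ≥ 0 and Borel A), then μ(D) = 0. -/
open Set Filter Metric ENNReal

/-- The half-open flow tube `{φ_t(x) : 0 < t < ξ}`. -/
def Tube {X : Type*} (φ : ℝ → X → X) (x : X) (ξ : ℝ) : Set X :=
  {y | ∃ t : ℝ, 0 < t ∧ t < ξ ∧ y = φ t x}

/-- The set `D_ξ = ⋃_{x ∈ D} {φ_t(x) : 0 < t < ξ}`. -/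
def Dxi {X : Type*} (φ : ℝ → X → X) (D : Set X) (ξ : ℝ) : Set X :=
  ⋃ x ∈ D, Tube φ x ξ

/-- `D` satisfies the half-tube condition with parameter `ξ₀`. -/
def HalfTube {X : Type*} [MetricSpace X] (φ : ℝ → X → X) (D : Set X) (ξ₀ : ℝ) : Prop :=
  0 < ξ₀ ∧
  (∀ ξ : ℝ, 0 < ξ → ξ ≤ ξ₀ → IsOpen (Dxi φ D ξ)) ∧
  (∀ x : X, ∀ t : ℝ, 0 < t → φ t x ∈ Dxi φ D ξ₀ →
    ∃ t' : ℝ, 0 ≤ t' ∧ t' < t ∧ φ t' x ∈ D) ∧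
  (∀ x₁ ∈ D, ∀ x₂ ∈ D, x₁ ≠ x₂ → Disjoint (Tube φ x₁ ξ₀) (Tube φ x₂ ξ₀))

/-- `ψ` is the impulsive semiflow of the impulsive dynamical system `(X, φ, D, I)`:
it is a semiflow, it follows `φ` before the first hit of `D`, it jumps via `I` at the
first hitting time of `D`, and first hitting times are positive. -/
def IsImpulsive {X : Type*} (φ ψ : ℝ → X → X) (D : Set X) (I : X → X) : Prop :=
  IsSemiflow ψ ∧
  (∀ x : X, ∀ t : ℝ, 0 ≤ t → (∀ s : ℝ, 0 < s → s ≤ t → φ s x ∉ D) → ψ t x = φ t x) ∧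
  (∀ x : X, ∀ t : ℝ, 0 < t → φ t x ∈ D → (∀ s : ℝ, 0 < s → s < t → φ s x ∉ D) →
    ψ t x = I (φ t x)) ∧
  (∀ x : X, ∃ t : ℝ, 0 < t ∧ ∀ s : ℝ, 0 < s → s < t → φ s x ∉ D)

/-- `t` is the first (positive) hitting time of `D` by the `φ`-orbit of `x`. -/
def FirstHitAt {X : Type*} (φ : ℝ → X → X) (D : Set X) (x : X) (t : ℝ) : Prop :=
  0 < t ∧ φ t x ∈ D ∧ ∀ s : ℝ, 0 < s → s < t → φ s x ∉ D

/-- First hitting time of `D` as an extended nonnegative real (`∞` if the orbit never hits `D`). -/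
noncomputable def firstHit {X : Type*} (φ : ℝ → X → X) (D : Set X) (x : X) : ℝ≥0∞ :=
  sInf (ENNReal.ofReal '' {t : ℝ | 0 < t ∧ φ t x ∈ D})

open Classical in
/-- The function `τ*`, equal to the first hitting time of `D` off `D` and `0` on `D`. -/
noncomputable def tauStar {X : Type*} (φ : ℝ → X → X) (D : Set X) (x : X) : ℝ≥0∞ :=
  if x ∈ D then 0 else firstHit φ D x

/-- The equivalence relation identifying points of `D` with their images under `I`:
`x ∼ y` iff `x = y`, `y = I x`, `x = I y`, or `I x = I y` (with the relevant points in `D`). -/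
def ImpRel {X : Type*} (D : Set X) (I : X → X) (x y : X) : Prop :=
  x = y ∨ (x ∈ D ∧ y = I x) ∨ (y ∈ D ∧ x = I y) ∨ (x ∈ D ∧ y ∈ D ∧ I x = I y)

/-- The quotient pseudometric induced by `dist` and the relation `ImpRel D I`:
infimum of chain sums `d(p₁,q₁) + ⋯ + d(pₙ,qₙ)` with `p₁ ∼ x`, `qᵢ ∼ pᵢ₊₁`, `qₙ ∼ y`. -/
noncomputable def chainDist {X : Type*} [MetricSpace X] (D : Set X) (I : X → X)
    (x y : X) : ℝ :=
  sInf {s : ℝ | ∃ n : ℕ, ∃ p q : Fin (n + 1) → X,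
    ImpRel D I x (p 0) ∧ ImpRel D I (q (Fin.last n)) y ∧
    (∀ i : Fin n, ImpRel D I (q i.castSucc) (p i.succ)) ∧
    s = ∑ i, dist (p i) (q i)}

/-- The set `X_ξ = X ∖ (D_ξ ∪ D)`. -/
def Xxi {X : Type*} (φ : ℝ → X → X) (D : Set X) (ξ : ℝ) : Set X :=
  Set.univ \ (Dxi φ D ξ ∪ D)

/-- The set `S` is transverse to the semiflow `φ`: no immediate return to `S`,
and the flow tubes issued from distinct points of `S` are pairwise disjoint. -/
def TransverseSet {X : Type*} [MetricSpace X] (φ : ℝ → X → X) (S : Set X) : Prop :=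
  ∃ s₀ : ℝ, 0 < s₀ ∧ ∃ ξ₀ : ℝ, 0 < ξ₀ ∧
    (∀ x : X, ∀ t : ℝ, 0 ≤ t → φ t x ∈ S → ∀ s : ℝ, 0 < s → s < s₀ → φ (t + s) x ∉ S) ∧
    (∀ x₁ ∈ S, ∀ x₂ ∈ S, x₁ ≠ x₂ → Disjoint (Tube φ x₁ ξ₀) (Tube φ x₂ ξ₀))
open MeasureTheory

/-- If the `φ`-orbit of `x` hits `D` by time `T`, there is a first hitting time `t₁ ≤ T`. -/
lemma exists_firstHitAt_aux {X : Type*} [MetricSpace X] (φ : ℝ → X → X) (D : Set X)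
    (hφc : ContinuousOn (fun p : ℝ × X => φ p.1 p.2) (Set.Ici (0:ℝ) ×ˢ Set.univ))
    (hDc : IsClosed D) (x : X) (ε : ℝ) (hε : 0 < ε)
    (hno : ∀ s : ℝ, 0 < s → s < ε → φ s x ∉ D)
    (T s₀ : ℝ) (hs₀ : 0 < s₀) (hs₀T : s₀ ≤ T) (hs₀D : φ s₀ x ∈ D) :
    ∃ t₁ : ℝ, FirstHitAt φ D x t₁ ∧ t₁ ≤ T := by
  have hcont : ContinuousOn (fun s : ℝ => φ s x) (Set.Icc ε T) := by
    have : ContinuousOn (fun s : ℝ => φ s x) (Set.Ici (0:ℝ)) := by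
      have h2 : ContinuousOn (fun s : ℝ => (s, x)) (Set.Ici (0:ℝ)) :=
        (continuous_id.prodMk continuous_const).continuousOn
      refine ContinuousOn.comp hφc h2 ?_
      intro s hs; exact ⟨hs, Set.mem_univ x⟩
    exact this.mono (fun s hs => le_trans hε.le hs.1)
  set A : Set ℝ := Set.Icc ε T ∩ (fun s : ℝ => φ s x) ⁻¹' D with hA
  have hAclosed : IsClosed A := hcont.preimage_isClosed_of_isClosed isClosed_Icc hDc
  have hs₀ε : ε ≤ s₀ := by
    by_contra h; push_neg at h; exact hno s₀ hs₀ h hs₀D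
  have hAne : A.Nonempty := ⟨s₀, ⟨hs₀ε, hs₀T⟩, hs₀D⟩
  have hAbdd : BddBelow A := ⟨ε, fun a ha => ha.1.1⟩
  have hmem : sInf A ∈ A := hAclosed.csInf_mem hAne hAbdd
  refine ⟨sInf A, ⟨lt_of_lt_of_le hε hmem.1.1, hmem.2, ?_⟩, hmem.1.2⟩
  intro s hs hslt hsD
  have hsε : ε ≤ s := by
    by_contra h; push_neg at h; exact hno s hs h hsD
  have : s ∈ A := ⟨⟨hsε, le_trans hslt.le hmem.1.2⟩, hsD⟩
  exact absurd (csInf_le hAbdd this) (not_le.mpr hslt)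

/-- Any `ψ`-invariant Borel probability measure gives zero mass to `D`. -/
theorem measure_D_eq_zero {X : Type*} [MetricSpace X] [CompactSpace X]
    [MeasurableSpace X] [BorelSpace X]
    (φ ψ : ℝ → X → X) (D : Set X) (I : X → X)
    (hφ : IsContSemiflow φ) (hD : IsCompact D) (hI : ContinuousOn I D)
    (himp : IsImpulsive φ ψ D I) (hID : I '' D ∩ D = ∅)
    (μ : Measure X) (hprob : IsProbabilityMeasure μ)
    (hinv : ∀ t : ℝ, 0 ≤ t → ∀ A : Set X, MeasurableSet A → μ (ψ t ⁻¹' A) = μ A) :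
    μ D = 0 := by
  rcases D.eq_empty_or_nonempty with hDe | hDne
  · simp [hDe]
  obtain ⟨⟨hψ0, hψadd⟩, hψ_pre, hψ_jump, hψ_pos⟩ := himp
  obtain ⟨⟨hφ0, _⟩, hφc⟩ := hφ
  -- positive distance between I(D) and D
  set K := I '' D with hK
  have hKc : IsCompact K := hD.image_of_continuousOn hI
  have hKne : K.Nonempty := hDne.image I
  obtain ⟨y₀, hy₀K, hmin⟩ := hKc.exists_isMinOn hKne (continuous_infDist_pt D).continuousOn
  set d := Metric.infDist y₀ D with hdd
  have hd : 0 < d := by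
    have hy₀D : y₀ ∉ D := by
      intro h
      have : y₀ ∈ I '' D ∩ D := ⟨hy₀K, h⟩
      rw [hID] at this; exact this
    exact (hD.isClosed.notMem_iff_infDist_pos hDne).mp hy₀D
  -- uniform small-time displacement bound: ∃ η > 0, ∀ s ∈ [0,η], dist (φ s y) y < d
  have hFcont : Continuous (fun p : ℝ × X => dist (φ (max p.1 0) p.2) p.2) := by
    have hG : Continuous (fun p : ℝ × X => φ (max p.1 0) p.2) := by
      refine hφc.comp_continuous ((continuous_fst.max continuous_const).prodMk continuous_snd) ?_
      intro p; exact ⟨(le_max_right p.1 0 : (0:ℝ) ≤ max p.1 0), Set.mem_univ _⟩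
    exact hG.dist continuous_snd
  have hVopen : IsOpen {p : ℝ × X | dist (φ (max p.1 0) p.2) p.2 < d} :=
    isOpen_lt hFcont continuous_const
  have hsub : ({0} : Set ℝ) ×ˢ (Set.univ : Set X) ⊆
      {p : ℝ × X | dist (φ (max p.1 0) p.2) p.2 < d} := by
    rintro ⟨s, y⟩ ⟨hs, -⟩
    simp only [Set.mem_singleton_iff] at hs
    subst hs
    simp only [Set.mem_setOf_eq, max_self, hφ0, dist_self]
    exact hd
  obtain ⟨u, v, hu, hv, h0u, hvuniv, huv⟩ :=
    generalized_tube_lemma isCompact_singleton isCompact_univ hVopen hsub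
  obtain ⟨η, hη, hball⟩ := Metric.isOpen_iff.mp hu 0 (h0u rfl)
  set η' := η / 2 with hη'
  have hη'pos : 0 < η' := by positivity
  have hdisp : ∀ (y : X) (s : ℝ), 0 ≤ s → s ≤ η' → dist (φ s y) y < d := by
    intro y s hs hsη
    have hsu : s ∈ u := hball (by
      simp only [Metric.mem_ball, Real.dist_eq, sub_zero, abs_of_nonneg hs]
      linarith)
    have : (s, y) ∈ {p : ℝ × X | dist (φ (max p.1 0) p.2) p.2 < d} :=
      huv ⟨hsu, hvuniv (Set.mem_univ y)⟩
    simpa [max_eq_left hs] using this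
  -- points of K = I(D) stay out of D (under φ) for time ≤ η'
  have hKprop : ∀ y ∈ K, ∀ s : ℝ, 0 < s → s ≤ η' → φ s y ∉ D := by
    intro y hyK s hs hsη hsD
    have h1 : d ≤ Metric.infDist y D := isMinOn_iff.mp hmin y hyK
    have h2 : Metric.infDist y D ≤ dist y (φ s y) := Metric.infDist_le_dist_of_mem hsD
    have h3 : dist (φ s y) y < d := hdisp y s hs.le hsη
    rw [dist_comm] at h3; linarith
  -- points of K stay out of D under ψ for time ≤ η'
  have key0 : ∀ y ∈ K, ∀ r : ℝ, 0 < r → r ≤ η' → ψ r y ∉ D := by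
    intro y hyK r hr hrη
    rw [hψ_pre y r hr.le (fun s hs hsr => hKprop y hyK s hs (hsr.trans hrη))]
    exact hKprop y hyK r hr hrη
  -- main claim: ψ η' x ∉ D for all x
  have main : ∀ x : X, ψ η' x ∉ D := by
    intro x hxD
    by_cases hhit : ∃ s : ℝ, 0 < s ∧ s ≤ η' ∧ φ s x ∈ D
    · obtain ⟨s₀, hs₀, hs₀η, hs₀D⟩ := hhit
      obtain ⟨ε, hε, hno⟩ := hψ_pos x
      obtain ⟨t₁, ⟨ht₁pos, ht₁D, ht₁first⟩, ht₁η⟩ :=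
        exists_firstHitAt_aux φ D hφc hD.isClosed x ε hε hno η' s₀ hs₀ hs₀η hs₀D
      have hjump : ψ t₁ x = I (φ t₁ x) := hψ_jump x t₁ ht₁pos ht₁D ht₁first
      have hyK : ψ t₁ x ∈ K := hjump ▸ Set.mem_image_of_mem I ht₁D
      rcases eq_or_lt_of_le ht₁η with heq | hlt
      · rw [heq] at hyK
        have : ψ η' x ∈ I '' D ∩ D := ⟨hyK, hxD⟩
        rw [hID] at this; exact this
      · have hsplit : ψ η' x = ψ (η' - t₁) (ψ t₁ x) := by
          have := hψadd t₁ (η' - t₁) ht₁pos.le (by linarith) x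
          rw [sub_add_cancel] at this; exact this
        rw [hsplit] at hxD
        exact key0 _ hyK (η' - t₁) (by linarith) (by linarith) hxD
    · push_neg at hhit
      rw [hψ_pre x η' hη'pos.le (fun s hs hsr => hhit s hs hsr)] at hxD
      exact hhit η' hη'pos le_rfl hxD
  have hempty : ψ η' ⁻¹' D = ∅ :=
    Set.eq_empty_iff_forall_notMem.mpr fun x hx => main x hx
  have := hinv η' hη'pos.le D hD.isClosed.measurableSet
  rw [hempty, measure_empty] at this
  exact this.symm
end

section
/- Let ψ be a semiflow on a compact metric space X and ψ̃ a semiflow on a compact metric space X̃, and let i: X_ξ → X be the inclusion of a forward-invariant Borel subset X_ξ whose complement is ψ-invariantly null (every ψ-invariant Borel probability measure on X gives zero measure to X ∖ X_ξ), and f: X_ξ → X̃ a bimeasurable bijection with f ∘ ψ_t = ψ̃_t ∘ f for all t ≥ 0. Then the map ν ↦ (i ∘ f⁻¹)_* ν is a bijection from the set of ψ̃-invariant Borel probability measures on X̃ onto the set of ψ-invariant Borel probability measures on X. -/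
open Set Filter Metric ENNReal

/-- `P` is a finite measurable partition of `X` modulo `μ`-null sets. -/
def IsMeasPartition {X : Type*} [MeasurableSpace X] (μ : MeasureTheory.Measure X)
    (P : Finset (Set X)) : Prop :=
  (∀ A ∈ P, MeasurableSet A) ∧ μ (Set.univ \ ⋃₀ ↑P) = 0 ∧
  ∀ A ∈ P, ∀ B ∈ P, A ≠ B → μ (A ∩ B) = 0

/-- Entropy of a finite partition: `∑_{A ∈ P} -μ(A) log μ(A)`. -/
noncomputable def partEntropy {X : Type*} [MeasurableSpace X] (μ : MeasureTheory.Measure X)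
    (P : Finset (Set X)) : ℝ :=
  ∑ A ∈ P, Real.negMulLog (μ A).toReal

open Classical in
/-- The joint refinement `P ∨ T⁻¹P ∨ ⋯ ∨ T^{-(n-1)}P`. -/
noncomputable def jointPart {X : Type*} (T : X → X) (P : Finset (Set X)) (n : ℕ) :
    Finset (Set X) :=
  (Finset.univ : Finset (Fin n → {A // A ∈ P})).image
    (fun f => ⋂ i : Fin n, (T^[(i : ℕ)]) ⁻¹' (f i).1)

/-- Entropy of `T` with respect to the partition `P`:
`lim_{n→∞} (1/n) H_μ(P ∨ ⋯ ∨ T^{-(n-1)}P)`. -/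
noncomputable def partKS {X : Type*} [MeasurableSpace X] (μ : MeasureTheory.Measure X)
    (T : X → X) (P : Finset (Set X)) : ℝ :=
  Filter.limsup (fun n : ℕ => partEntropy μ (jointPart T P n) / n) Filter.atTop

/-- The Kolmogorov–Sinai (measure-theoretic) entropy of `T` with respect to `μ`. -/
noncomputable def kolSinaiEntropy {X : Type*} [MeasurableSpace X] (μ : MeasureTheory.Measure X)
    (T : X → X) : ℝ :=
  ⨆ (P : Finset (Set X)) (_ : IsMeasPartition μ P), partKS μ T P

/-- `μ` is a `ψ`-invariant Borel probability measure. -/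
def IsInvariantProb {X : Type*} [MeasurableSpace X] (ψ : ℝ → X → X)
    (μ : MeasureTheory.Measure X) : Prop :=
  MeasureTheory.IsProbabilityMeasure μ ∧
  ∀ t : ℝ, 0 ≤ t → ∀ A : Set X, MeasurableSet A → μ (ψ t ⁻¹' A) = μ A
open MeasureTheory

/-- Pushing forward by `i ∘ f⁻¹` is a bijection between invariant probability measures of the
quotient semiflow and invariant probability measures of the impulsive semiflow. -/
theorem pushforward_bijection_of_invariant_measures
    {X Y : Type*} [MetricSpace X] [CompactSpace X] [MeasurableSpace X] [BorelSpace X]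
    [MetricSpace Y] [CompactSpace Y] [MeasurableSpace Y] [BorelSpace Y]
    (ψ : ℝ → X → X) (ψt : ℝ → Y → Y) (hψ : IsSemiflow ψ) (hψt : IsSemiflow ψt)
    (hmeas : ∀ t : ℝ, 0 ≤ t → Measurable (ψ t)) (hmeast : ∀ t : ℝ, 0 ≤ t → Measurable (ψt t))
    (Xξ : Set X) (hXm : MeasurableSet Xξ)
    (hfwd : ∀ t : ℝ, 0 ≤ t → Set.MapsTo (ψ t) Xξ Xξ)
    (hnull : ∀ μ : Measure X, IsInvariantProb ψ μ → μ (Set.univ \ Xξ) = 0)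
    (f : Xξ → Y) (hfb : Function.Bijective f) (hfm : Measurable f)
    (g : Y → Xξ) (hgf : Function.LeftInverse g f) (hfg : Function.RightInverse g f)
    (hgm : Measurable g)
    (hconj : ∀ t : ℝ, ∀ ht : 0 ≤ t, ∀ x : Xξ,
      f ⟨ψ t x.1, hfwd t ht x.2⟩ = ψt t (f x)) :
    ∃ F : {ν : Measure Y // IsInvariantProb ψt ν} → {μ : Measure X // IsInvariantProb ψ μ},
      (∀ ν, (F ν).1 = Measure.map (fun y : Y => ((g y : Xξ) : X)) ν.1) ∧
      Function.Bijective F := by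
  classical
  set h : Y → X := fun y => ((g y : Xξ) : X) with hh
  have hinjg : Function.Injective g := hfg.injective
  have hinjh : Function.Injective h := Subtype.val_injective.comp hinjg
  have hmh : Measurable h := measurable_subtype_coe.comp hgm
  have hcomm : ∀ t : ℝ, 0 ≤ t → ∀ y, h (ψt t y) = ψ t (h y) := by
    intro t ht y
    have h1 := hconj t ht (g y)
    rw [hfg y] at h1
    have h2 := congrArg g h1
    rw [hgf] at h2
    simp only [hh]
    rw [← h2]
  have emb_val : MeasurableEmbedding (Subtype.val : Xξ → X) :=
    MeasurableEmbedding.subtype_coe hXm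
  -- forward direction: pushforward preserves invariance
  have fwd : ∀ ν : Measure Y, IsInvariantProb ψt ν → IsInvariantProb ψ (Measure.map h ν) := by
    intro ν hν
    haveI := hν.1
    refine ⟨Measure.isProbabilityMeasure_map hmh.aemeasurable, ?_⟩
    intro t ht A hA
    rw [Measure.map_apply hmh ((hmeas t ht) hA), Measure.map_apply hmh hA]
    have hpre : h ⁻¹' (ψ t ⁻¹' A) = ψt t ⁻¹' (h ⁻¹' A) := by
      ext y
      simp only [Set.mem_preimage, hcomm t ht y]
    rw [hpre, hν.2 t ht _ (hmh hA)]
  have hE : MeasurableEmbedding h := hmh.measurableEmbedding hinjh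
  refine ⟨fun ν => ⟨Measure.map h ν.1, fwd ν.1 ν.2⟩, fun ν => rfl, ?_, ?_⟩
  · -- injectivity
    intro ν₁ ν₂ hEq
    have hmaps : Measure.map h ν₁.1 = Measure.map h ν₂.1 := congrArg Subtype.val hEq
    apply Subtype.ext
    ext s hs
    have h1 : Measure.map h ν₁.1 (h '' s) = ν₁.1 s := by
      rw [hE.map_apply, Set.preimage_image_eq _ hinjh]
    have h2 : Measure.map h ν₂.1 (h '' s) = ν₂.1 s := by
      rw [hE.map_apply, Set.preimage_image_eq _ hinjh]
    rw [← h1, ← h2, hmaps]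
  · -- surjectivity
    rintro ⟨μ, hμ⟩
    haveI := hμ.1
    have hXc : μ Xξᶜ = 0 := by
      have := hnull μ hμ
      rwa [← Set.compl_eq_univ_diff] at this
    set μ₀ : Measure Xξ := Measure.comap Subtype.val μ with hμ₀
    have hμ₀app : ∀ s : Set Xξ, μ₀ s = μ (Subtype.val '' s) := fun s => emb_val.comap_apply μ s
    set ν : Measure Y := Measure.map f μ₀ with hν
    have hνapp : ∀ A : Set Y, MeasurableSet A → ν A = μ (Subtype.val '' (f ⁻¹' A)) := by
      intro A hA
      rw [hν, Measure.map_apply hfm hA, hμ₀app]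
    have himg : ∀ B : Set Xξ, ∀ t : ℝ, ∀ ht : 0 ≤ t,
        Subtype.val '' ((fun x : Xξ => (⟨ψ t x.1, hfwd t ht x.2⟩ : Xξ)) ⁻¹' B)
          = ψ t ⁻¹' (Subtype.val '' B) ∩ Xξ := by
      intro B t ht
      ext x
      constructor
      · rintro ⟨z, hz, rfl⟩
        exact ⟨⟨_, hz, rfl⟩, z.2⟩
      · rintro ⟨⟨b, hb, hbe⟩, hx⟩
        refine ⟨⟨x, hx⟩, ?_, rfl⟩
        have heq : b = ⟨ψ t x, hfwd t ht hx⟩ := Subtype.ext hbe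
        show (⟨ψ t x, hfwd t ht hx⟩ : Xξ) ∈ B
        rw [← heq]; exact hb
    have hνinv : IsInvariantProb ψt ν := by
      constructor
      · constructor
        rw [hνapp Set.univ MeasurableSet.univ, Set.preimage_univ, Set.image_univ,
          Subtype.range_coe, ← Set.univ_inter Xξ, measure_inter_conull hXc, measure_univ]
      · intro t ht A hA
        have hB : MeasurableSet (f ⁻¹' A) := hfm hA
        have hpre : f ⁻¹' (ψt t ⁻¹' A)
            = (fun x : Xξ => (⟨ψ t x.1, hfwd t ht x.2⟩ : Xξ)) ⁻¹' (f ⁻¹' A) := by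
          ext x
          simp only [Set.mem_preimage, ← hconj t ht x]
        rw [hνapp _ ((hmeast t ht) hA), hνapp _ hA, hpre, himg _ t ht]
        have hvB : MeasurableSet (Subtype.val '' (f ⁻¹' A)) :=
          emb_val.measurableSet_image.mpr hB
        rw [measure_inter_conull hXc, hμ.2 t ht _ hvB]
    refine ⟨⟨ν, hνinv⟩, ?_⟩
    apply Subtype.ext
    show Measure.map h ν = μ
    rw [hν, Measure.map_map hmh hfm]
    have hhf : h ∘ f = (Subtype.val : Xξ → X) := by
      funext x
      simp only [hh, Function.comp_apply, hgf x]
    rw [hhf, hμ₀, emb_val.map_comap, Subtype.range_coe]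
    exact Measure.restrict_eq_self_of_ae_mem (by rwa [Filter.Eventually, MeasureTheory.mem_ae_iff])
end

section
/- Let X be a compact metric space with metric d, D ⊂ X compact, and I: D → X continuous with I(D) ∩ D = ∅. Let ∼ be the equivalence relation: x ∼ y iff x = y, y = I(x), x = I(y), or I(x) = I(y), and π: X → X/∼ the projection. Then the restriction of π to X_ξ = X ∖ (D_ξ ∪ D) is injective, and π(X_ξ) = π(X_ξ ∪ D). -/
open Set Filter Metric ENNReal

lemma impRel_equivalence {X : Type*} (D : Set X) (I : X → X)
    (hID : I '' D ∩ D = ∅) : Equivalence (ImpRel D I) := by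
  have hnot : ∀ x ∈ D, I x ∉ D := by
    intro x hx hIx
    have : I x ∈ I '' D ∩ D := ⟨⟨x, hx, rfl⟩, hIx⟩
    rw [hID] at this
    exact this
  constructor
  · intro x; exact Or.inl rfl
  · rintro a b (rfl | ⟨ha, rfl⟩ | ⟨hb, rfl⟩ | ⟨ha, hb, h⟩)
    · exact Or.inl rfl
    · exact Or.inr (Or.inr (Or.inl ⟨ha, rfl⟩))
    · exact Or.inr (Or.inl ⟨hb, rfl⟩)
    · exact Or.inr (Or.inr (Or.inr ⟨hb, ha, h.symm⟩))
  · rintro a b c (rfl | ⟨ha, rfl⟩ | ⟨hb, rfl⟩ | ⟨ha, hb, h⟩) hbc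
    · exact hbc
    · rcases hbc with rfl | ⟨hb, rfl⟩ | ⟨hc, hb⟩ | ⟨hb, hc, h2⟩
      · exact Or.inr (Or.inl ⟨ha, rfl⟩)
      · exact absurd hb (hnot a ha)
      · exact Or.inr (Or.inr (Or.inr ⟨ha, hc, hb⟩))
      · exact absurd hb (hnot a ha)
    · rcases hbc with rfl | ⟨hb', rfl⟩ | ⟨hc, rfl⟩ | ⟨hb', hc, h2⟩
      · exact Or.inr (Or.inr (Or.inl ⟨hb, rfl⟩))
      · exact Or.inl rfl
      · exact absurd hb (hnot c hc)
      · exact Or.inr (Or.inr (Or.inl ⟨hc, h2 ▸ rfl⟩))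
    · rcases hbc with rfl | ⟨hb', rfl⟩ | ⟨hc, hbc⟩ | ⟨hb', hc, h2⟩
      · exact Or.inr (Or.inr (Or.inr ⟨ha, hb, h⟩))
      · exact Or.inr (Or.inl ⟨ha, h ▸ rfl⟩)
      · exact absurd (hbc ▸ hnot c hc) (fun hn => hn hb)
      · exact Or.inr (Or.inr (Or.inr ⟨ha, hc, h.trans h2⟩))

/-- The projection `π` is injective on `X_ξ`, and `π(X_ξ) = π(X_ξ ∪ D)`. -/
theorem quot_injOn_Xxi {X : Type*} [MetricSpace X] [CompactSpace X]
    (φ : ℝ → X → X) (D : Set X) (I : X → X)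
    (hφ : IsContSemiflow φ) (hD : IsCompact D) (hI : ContinuousOn I D)
    (hID : I '' D ∩ D = ∅) (ξ : ℝ) (hξ : 0 < ξ)
    (hIXξ : ∀ x ∈ D, I x ∈ Xxi φ D ξ) :
    Set.InjOn (Quot.mk (ImpRel D I)) (Xxi φ D ξ) ∧
    Quot.mk (ImpRel D I) '' Xxi φ D ξ = Quot.mk (ImpRel D I) '' (Xxi φ D ξ ∪ D) := by
  have heqv := impRel_equivalence D I hID
  have hXD : ∀ x, x ∈ Xxi φ D ξ → x ∉ D := by
    intro x hx hxD
    exact hx.2 (Or.inr hxD)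
  constructor
  · intro x hx y hy hxy
    have hrel : ImpRel D I x y := (heqv.eqvGen_iff).mp (Quot.eq.mp hxy)
    rcases hrel with rfl | ⟨hxD, _⟩ | ⟨hyD, _⟩ | ⟨hxD, _, _⟩
    · rfl
    · exact absurd hxD (hXD x hx)
    · exact absurd hyD (hXD y hy)
    · exact absurd hxD (hXD x hx)
  · apply Set.Subset.antisymm
    · exact Set.image_mono Set.subset_union_left
    · rintro q ⟨x, hx | hx, rfl⟩
      · exact ⟨x, hx, rfl⟩
      · refine ⟨I x, hIXξ x hx, ?_⟩
        exact Quot.sound (Or.inr (Or.inr (Or.inl ⟨hx, rfl⟩)))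
end
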